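/- Linear convergence of constrained RBCD: let h(x) = Σ_i h_i(x_i) with each h_i L_i-smooth and μ-strongly convex, x* the minimizer over C = {x : Σ_i x_i = 0}, and sample I of size τ with probability ∝ e_Iᵀ L⁻¹ e_I. For x ∈ C and y = x − G_I ∇h(x), one has 𝔼_I[h(y)] − h(x*) ≤ (1 − ((τ−1)/(n−1)) (μ/L_max)) (h(x) − h(x*)). -/

import Mathlib

open Matrix BigOperators Finset
-- weighted Cauchy-Schwarz
lemma wcs {ι : Type*} (s : Finset ι) (w f : ι → ℝ) (hw : ∀ i ∈ s, 0 ≤ w i) :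
    (∑ i ∈ s, w i * f i) ^ 2 ≤ (∑ i ∈ s, w i) * ∑ i ∈ s, w i * f i ^ 2 :=
  Finset.sum_sq_le_sum_mul_sum_of_sq_eq_mul s hw
    (fun i hi => mul_nonneg (hw i hi) (sq_nonneg _)) (fun i _ => by ring)

-- counting subsets of size k containing t
lemma count_sub {α : Type*} [DecidableEq α] (s t : Finset α) (k : ℕ) (hts : t ⊆ s)
    (htk : t.card ≤ k) :
    ((Finset.powersetCard k s).filter (fun I => t ⊆ I)).card
      = (s.card - t.card).choose (k - t.card) := by
  rw [← Finset.card_sdiff_of_subset hts, ← Finset.card_powersetCard (k - t.card) (s \ t)]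
  apply Finset.card_bij' (fun I _ => I \ t) (fun J _ => J ∪ t)
  · intro I hI
    simp only [Finset.mem_filter, Finset.mem_powersetCard] at hI
    obtain ⟨⟨hIs, hIc⟩, htI⟩ := hI
    simp only [Finset.mem_powersetCard]
    exact ⟨Finset.sdiff_subset_sdiff hIs (le_refl t), by rw [Finset.card_sdiff_of_subset htI, hIc]⟩
  · intro J hJ
    simp only [Finset.mem_powersetCard] at hJ
    obtain ⟨hJs, hJc⟩ := hJ
    have hdisj : Disjoint J t := Finset.disjoint_of_subset_left hJs (Finset.sdiff_disjoint)
    simp only [Finset.mem_filter, Finset.mem_powersetCard]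
    refine ⟨⟨Finset.union_subset (hJs.trans (Finset.sdiff_subset)) hts, ?_⟩,
      Finset.subset_union_right⟩
    rw [Finset.card_union_of_disjoint hdisj, hJc]
    omega
  · intro I hI
    simp only [Finset.mem_filter] at hI
    exact Finset.sdiff_union_of_subset hI.2
  · intro J hJ
    simp only [Finset.mem_powersetCard] at hJ
    have hdisj : Disjoint J t := Finset.disjoint_of_subset_left hJ.1 (Finset.sdiff_disjoint)
    rw [Finset.union_sdiff_right, Finset.sdiff_eq_self_of_disjoint hdisj]

lemma hsub_aux {n : ℕ} (I : Finset (Fin n)) (f : Fin n → ℝ) :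
    ∑ i ∈ I, f i = ∑ i : Fin n, if i ∈ I then f i else 0 := by
  rw [Finset.sum_ite_mem, Finset.univ_inter]

lemma swap_count1 {n τ : ℕ} (hτ : 1 ≤ τ) (hτn : τ ≤ n) (f : Fin n → ℝ) :
    ∑ I ∈ Finset.powersetCard τ (Finset.univ : Finset (Fin n)), ∑ i ∈ I, f i
      = ((n-1).choose (τ-1) : ℝ) * ∑ i, f i := by
  have key : ∀ i : Fin n,
      ((Finset.powersetCard τ (Finset.univ : Finset (Fin n))).filter
        (fun I => i ∈ I)).card = (n-1).choose (τ-1) := by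
    intro i
    have h1 : ((Finset.powersetCard τ (Finset.univ : Finset (Fin n))).filter
        (fun I => ({i} : Finset (Fin n)) ⊆ I)).card
        = ((Finset.univ : Finset (Fin n)).card - ({i} : Finset (Fin n)).card).choose
            (τ - ({i} : Finset (Fin n)).card) := by
      apply count_sub
      · exact Finset.subset_univ _
      · simpa using hτ
    simp only [Finset.card_singleton, Finset.card_univ, Fintype.card_fin,
      Finset.singleton_subset_iff] at h1
    exact h1
  calc ∑ I ∈ Finset.powersetCard τ (Finset.univ : Finset (Fin n)), ∑ i ∈ I, f i
      = ∑ I ∈ Finset.powersetCard τ (Finset.univ : Finset (Fin n)),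
          ∑ i : Fin n, if i ∈ I then f i else 0 := by
        exact Finset.sum_congr rfl fun I _ => hsub_aux I f
    _ = ∑ i : Fin n, ∑ I ∈ Finset.powersetCard τ (Finset.univ : Finset (Fin n)),
          if i ∈ I then f i else 0 := Finset.sum_comm
    _ = ∑ i : Fin n, (((Finset.powersetCard τ (Finset.univ : Finset (Fin n))).filter
          (fun I => i ∈ I)).card : ℝ) * f i := by
        refine Finset.sum_congr rfl fun i _ => ?_
        rw [← Finset.sum_filter, Finset.sum_const, nsmul_eq_mul]
    _ = ((n-1).choose (τ-1) : ℝ) * ∑ i, f i := by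
        rw [Finset.mul_sum]
        exact Finset.sum_congr rfl fun i _ => by rw [key i]

lemma swap_count2 {n τ : ℕ} (hτ : 2 ≤ τ) (hτn : τ ≤ n) (φ : Fin n → Fin n → ℝ)
    (hdiag : ∀ i, φ i i = 0) :
    ∑ I ∈ Finset.powersetCard τ (Finset.univ : Finset (Fin n)), ∑ i ∈ I, ∑ j ∈ I, φ i j
      = ((n-2).choose (τ-2) : ℝ) * ∑ i, ∑ j, φ i j := by
  have key : ∀ i j : Fin n, i ≠ j →
      ((Finset.powersetCard τ (Finset.univ : Finset (Fin n))).filter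
        (fun I => i ∈ I ∧ j ∈ I)).card = (n-2).choose (τ-2) := by
    intro i j hij
    have hpred : (Finset.powersetCard τ (Finset.univ : Finset (Fin n))).filter
          (fun I => i ∈ I ∧ j ∈ I)
        = (Finset.powersetCard τ (Finset.univ : Finset (Fin n))).filter
          (fun I => ({i, j} : Finset (Fin n)) ⊆ I) :=
      Finset.filter_congr (fun I _ => by simp [Finset.insert_subset_iff])
    rw [hpred]
    have h1 := count_sub (Finset.univ : Finset (Fin n)) {i, j} τ (Finset.subset_univ _)
      (by rw [Finset.card_insert_of_notMem (by simpa using hij), Finset.card_singleton]; exact hτ)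
    rw [h1, Finset.card_insert_of_notMem (by simpa using hij), Finset.card_singleton,
      Finset.card_univ, Fintype.card_fin]
  calc ∑ I ∈ Finset.powersetCard τ (Finset.univ : Finset (Fin n)), ∑ i ∈ I, ∑ j ∈ I, φ i j
      = ∑ I ∈ Finset.powersetCard τ (Finset.univ : Finset (Fin n)),
          ∑ i : Fin n, ∑ j : Fin n, if i ∈ I ∧ j ∈ I then φ i j else 0 := by
        refine Finset.sum_congr rfl fun I _ => ?_
        rw [hsub_aux I (fun i => ∑ j ∈ I, φ i j)]
        refine Finset.sum_congr rfl fun i _ => ?_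
        by_cases hi : i ∈ I
        · simp only [hi, if_true, true_and]
          exact hsub_aux I _
        · simp [hi]
    _ = ∑ i : Fin n, ∑ j : Fin n,
          ∑ I ∈ Finset.powersetCard τ (Finset.univ : Finset (Fin n)),
            if i ∈ I ∧ j ∈ I then φ i j else 0 := by
        rw [Finset.sum_comm]
        exact Finset.sum_congr rfl fun i _ => Finset.sum_comm
    _ = ∑ i : Fin n, ∑ j : Fin n,
          (((Finset.powersetCard τ (Finset.univ : Finset (Fin n))).filter
            (fun I => i ∈ I ∧ j ∈ I)).card : ℝ) * φ i j := by
        refine Finset.sum_congr rfl fun i _ => Finset.sum_congr rfl fun j _ => ?_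
        rw [← Finset.sum_filter, Finset.sum_const, nsmul_eq_mul]
    _ = ((n-2).choose (τ-2) : ℝ) * ∑ i, ∑ j, φ i j := by
        rw [Finset.mul_sum]
        refine Finset.sum_congr rfl fun i _ => ?_
        rw [Finset.mul_sum]
        refine Finset.sum_congr rfl fun j _ => ?_
        by_cases hij : i = j
        · subst hij; rw [hdiag i, mul_zero, mul_zero]
        · rw [key i j hij]

lemma aux_young {μ : ℝ} (hμ : 0 < μ) (B Sv : ℝ) :
    - (B * Sv) - μ/2 * Sv^2 ≤ B^2/(2*μ) := by
  rw [le_div_iff₀ (by linarith : (0:ℝ) < 2*μ)]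
  nlinarith [sq_nonneg (B + μ * Sv)]
theorem stmt12 {n : ℕ} (τ : ℕ) (hτ : 2 ≤ τ) (hτn : τ ≤ n)
    (L : Fin n → ℝ) (hL : ∀ i, 0 < L i)
    (Lmax : ℝ) (hLmax : ∀ i, L i ≤ Lmax) (μ : ℝ) (hμ : 0 < μ)
    (h : Fin n → ℝ → ℝ) (g : Fin n → ℝ → ℝ)
    (hderiv : ∀ i x, HasDerivAt (h i) (g i x) x)
    (hsmooth : ∀ i x y, h i x ≤ h i y + g i y * (x - y) + L i / 2 * (x - y) ^ 2)
    (hsc : ∀ i x y, h i y + g i y * (x - y) + μ / 2 * (x - y) ^ 2 ≤ h i x)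
    (xstar : Fin n → ℝ) (hfeas : ∑ i, xstar i = 0)
    (hopt : ∀ z : Fin n → ℝ, (∑ i, z i = 0) → (∑ i, h i (xstar i)) ≤ ∑ i, h i (z i))
    (x : Fin n → ℝ) (hx : ∑ i, x i = 0) :
    let eI : Finset (Fin n) → (Fin n → ℝ) := fun I i => if i ∈ I then 1 else 0
    let c : Finset (Fin n) → ℝ := fun I => ∑ i ∈ I, (L i)⁻¹
    let v : Finset (Fin n) → (Fin n → ℝ) := fun I i => (L i)⁻¹ * eI I i
    let G : Finset (Fin n) → Matrix (Fin n) (Fin n) ℝ := fun I =>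
      Matrix.diagonal (fun i => eI I i * (L i)⁻¹) -
        (c I)⁻¹ • Matrix.vecMulVec (v I) (v I)
    let Psets := Finset.powersetCard τ (Finset.univ : Finset (Fin n))
    let p : Finset (Fin n) → ℝ := fun I => c I / ∑ J ∈ Psets, c J
    let H : (Fin n → ℝ) → ℝ := fun z => ∑ i, h i (z i)
    let gradH : (Fin n → ℝ) → (Fin n → ℝ) := fun z j => g j (z j)
    (∑ I ∈ Psets, p I * H (x - G I *ᵥ gradH x)) - H xstar
      ≤ (1 - (((τ : ℝ) - 1) / ((n : ℝ) - 1)) * (μ / Lmax)) * (H x - H xstar) := by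
  intro eI c v G Psets p H gradH
  have hn2 : 2 ≤ n := hτ.trans hτn
  set a : Fin n → ℝ := fun i => (L i)⁻¹ with ha_def
  set gv : Fin n → ℝ := fun j => g j (x j) with hgv_def
  have ha : ∀ i, 0 < a i := fun i => inv_pos.2 (hL i)
  have hμL : ∀ i, μ ≤ L i := by
    intro i
    have h1 := hsc i 1 0
    have h2 := hsmooth i 1 0
    nlinarith
  have i0 : Fin n := ⟨0, by omega⟩
  have hLmaxpos : 0 < Lmax := lt_of_lt_of_le (hL i0) (hLmax i0)
  set m : ℝ := Lmax⁻¹ with hm_def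
  have hm : ∀ i, m ≤ a i := fun i => inv_anti₀ (hL i) (hLmax i)
  have hmpos : 0 < m := inv_pos.2 hLmaxpos
  set cn : ℝ := ∑ i, a i with hcn_def
  have hcnpos : 0 < cn := Finset.sum_pos (fun i _ => ha i) ⟨i0, Finset.mem_univ i0⟩
  set S : ℝ := ∑ i, a i * gv i with hS_def
  set T : ℝ := ∑ i, a i * gv i ^ 2 with hT_def
  have hcI : ∀ I, I ∈ Psets → c I = ∑ i ∈ I, a i := fun I _ => rfl
  have hcIpos : ∀ I ∈ Psets, 0 < c I := by
    intro I hI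
    have hcard : I.card = τ := (Finset.mem_powersetCard_univ).1 hI
    have : I.Nonempty := Finset.card_pos.1 (by omega)
    exact Finset.sum_pos (fun i _ => ha i) this
  -- sum of quadratics helper (inline)
  have sum_quad : ∀ (s : Finset (Fin n)) (w u : Fin n → ℝ) (k : ℝ),
      ∑ i ∈ s, w i * (u i - k)^2
        = (∑ i ∈ s, w i * u i ^ 2) - 2*k*(∑ i ∈ s, w i * u i) + k^2 * ∑ i ∈ s, w i := by
    intro s w u k
    rw [Finset.mul_sum, Finset.mul_sum, ← Finset.sum_sub_distrib, ← Finset.sum_add_distrib]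
    exact Finset.sum_congr rfl fun i _ => by ring
  -- mulVec formula
  have hd : ∀ I ∈ Psets, ∀ i, (G I *ᵥ gradH x) i
      = if i ∈ I then a i * gv i - (c I)⁻¹ * (a i * ∑ j ∈ I, a j * gv j) else 0 := by
    intro I hI i
    have hgrad : gradH x = gv := rfl
    rw [hgrad]
    have h1 : (G I *ᵥ gv) i
        = (∑ j, (if i = j then eI I i * a i else 0) * gv j)
          - (c I)⁻¹ * ((a i * eI I i) * ∑ j, (a j * eI I j) * gv j) := by
      simp only [G, Matrix.mulVec, dotProduct, Matrix.sub_apply, Matrix.smul_apply,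
        Matrix.vecMulVec_apply, smul_eq_mul, Matrix.diagonal_apply, v, sub_mul]
      rw [Finset.sum_sub_distrib]
      congr 1
      rw [Finset.mul_sum, Finset.mul_sum]
      exact Finset.sum_congr rfl fun j _ => by ring
    rw [h1]
    have h2 : ∑ j, (if i = j then eI I i * a i else 0) * gv j = eI I i * a i * gv i := by
      rw [Finset.sum_eq_single i]
      · simp
      · intro j _ hj; simp [Ne.symm hj]
      · intro hi; exact absurd (Finset.mem_univ i) hi
    have h3 : ∑ j, (a j * eI I j) * gv j = ∑ j ∈ I, a j * gv j := by
      rw [hsub_aux I (fun j => a j * gv j)]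
      refine Finset.sum_congr rfl fun j _ => ?_
      by_cases hj : j ∈ I <;> simp [eI, hj]
    rw [h2, h3]
    by_cases hi : i ∈ I <;> simp [eI, hi]
  -- per-I descent
  have hdesc : ∀ I ∈ Psets, H (x - G I *ᵥ gradH x)
      ≤ H x - (1/2) * ((∑ i ∈ I, a i * gv i ^ 2) - (c I)⁻¹ * (∑ i ∈ I, a i * gv i)^2) := by
    intro I hI
    set SI : ℝ := ∑ i ∈ I, a i * gv i with hSI_def
    set TI : ℝ := ∑ i ∈ I, a i * gv i ^ 2 with hTI_def
    set d : Fin n → ℝ := G I *ᵥ gradH x with hd_def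
    have hcpos := hcIpos I hI
    have hcne : c I ≠ 0 := ne_of_gt hcpos
    have hdi : ∀ i, d i = if i ∈ I then a i * (gv i - (c I)⁻¹ * SI) else 0 := by
      intro i
      rw [hd_def, hd I hI i]
      by_cases hi : i ∈ I <;> simp [hi] <;> ring
    have step1 : H (x - d) ≤ H x + ∑ i, (- (gv i * d i) + L i / 2 * (d i)^2) := by
      have : ∀ i, h i ((x - d) i) ≤ h i (x i) + (- (gv i * d i) + L i / 2 * (d i)^2) := by
        intro i
        have := hsmooth i (x i - d i) (x i)
        have hxd : (x - d) i = x i - d i := rfl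
        rw [hxd]
        calc h i (x i - d i) ≤ h i (x i) + g i (x i) * (x i - d i - x i)
              + L i / 2 * (x i - d i - x i) ^ 2 := this
          _ = h i (x i) + (- (gv i * d i) + L i / 2 * (d i)^2) := by
              simp only [hgv_def]; ring
      calc H (x - d) ≤ ∑ i, (h i (x i) + (- (gv i * d i) + L i / 2 * (d i)^2)) :=
            Finset.sum_le_sum (fun i _ => this i)
        _ = H x + ∑ i, (- (gv i * d i) + L i / 2 * (d i)^2) := by
            rw [Finset.sum_add_distrib]
    have hsum1 : ∑ i, gv i * d i = TI - (c I)⁻¹ * SI^2 := by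
      have e1 : ∑ i, gv i * d i = ∑ i ∈ I, gv i * (a i * (gv i - (c I)⁻¹ * SI)) := by
        rw [hsub_aux I (fun i => gv i * (a i * (gv i - (c I)⁻¹ * SI)))]
        refine Finset.sum_congr rfl fun i _ => ?_
        rw [hdi i]
        by_cases hi : i ∈ I <;> simp [hi]
      rw [e1]
      have e2 : ∀ i ∈ I, gv i * (a i * (gv i - (c I)⁻¹ * SI))
          = a i * gv i ^ 2 - (c I)⁻¹ * SI * (a i * gv i) := fun i _ => by ring
      rw [Finset.sum_congr rfl e2, Finset.sum_sub_distrib, ← Finset.mul_sum]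
      rw [← hSI_def, ← hTI_def]
      ring
    have hsum2 : ∑ i, L i * (d i)^2 = TI - (c I)⁻¹ * SI^2 := by
      have e1 : ∑ i, L i * (d i)^2 = ∑ i ∈ I, a i * (gv i - (c I)⁻¹ * SI)^2 := by
        rw [hsub_aux I (fun i => a i * (gv i - (c I)⁻¹ * SI)^2)]
        refine Finset.sum_congr rfl fun i _ => ?_
        rw [hdi i]
        by_cases hi : i ∈ I
        · simp only [hi, if_true]
          have hLa : L i * a i = 1 := mul_inv_cancel₀ (ne_of_gt (hL i))
          have : L i * (a i * (gv i - (c I)⁻¹ * SI)) ^ 2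
              = (L i * a i) * (a i * (gv i - (c I)⁻¹ * SI)^2) := by ring
          rw [this, hLa, one_mul]
        · simp [hi]
      rw [e1, sum_quad I a gv ((c I)⁻¹ * SI), ← hSI_def, ← hTI_def, ← hcI I hI]
      field_simp
      ring
    calc H (x - d) ≤ H x + ∑ i, (- (gv i * d i) + L i / 2 * (d i)^2) := step1
      _ = H x - (∑ i, gv i * d i) + (1/2) * ∑ i, L i * (d i)^2 := by
          rw [Finset.sum_add_distrib, Finset.sum_neg_distrib]
          rw [Finset.mul_sum]
          have : ∀ i ∈ Finset.univ, L i / 2 * (d i)^2 = 1/2 * (L i * (d i)^2) :=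
            fun i _ => by ring
          rw [Finset.sum_congr rfl this, ← Finset.mul_sum]
          ring
      _ = H x - (1/2) * (TI - (c I)⁻¹ * SI^2) := by rw [hsum1, hsum2]; ring
  -- expectation identities
  set A' : ℝ := ((n-2).choose (τ-2) : ℝ) with hA'_def
  set B'' : ℝ := ((n-1).choose (τ-1) : ℝ) with hB''_def
  have hB''pos : 0 < B'' := by
    rw [hB''_def]
    exact_mod_cast Nat.choose_pos (by omega : τ - 1 ≤ n - 1)
  have hStot : ∑ J ∈ Psets, c J = B'' * cn := swap_count1 (by omega) hτn a
  have hStotpos : 0 < ∑ J ∈ Psets, c J := by rw [hStot]; positivity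
  have hAB : ((n:ℝ)-1) * A' = B'' * ((τ:ℝ)-1) := by
    have hnat := Nat.add_one_mul_choose_eq (n-2) (τ-2)
    have h1 : n-2+1 = n-1 := by omega
    have h2 : τ-2+1 = τ-1 := by omega
    rw [h1, h2] at hnat
    have hcast : ((n-1 : ℕ) : ℝ) * A' = B'' * ((τ-1 : ℕ) : ℝ) := by
      rw [hA'_def, hB''_def]; exact_mod_cast hnat
    rwa [Nat.cast_sub (by omega : 1 ≤ n), Nat.cast_sub (by omega : 1 ≤ τ),
      Nat.cast_one] at hcast
  have hφdiag : ∀ i : Fin n,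
      a i * gv i ^ 2 * a i - (a i * gv i) * (a i * gv i) = 0 := fun i => by ring
  have hIQ : ∀ I ∈ Psets,
      c I * ((∑ i ∈ I, a i * gv i ^ 2) - (c I)⁻¹ * (∑ i ∈ I, a i * gv i)^2)
        = ∑ i ∈ I, ∑ j ∈ I, (a i * gv i ^ 2 * a j - (a i * gv i) * (a j * gv j)) := by
    intro I hI
    have hcne : c I ≠ 0 := ne_of_gt (hcIpos I hI)
    have e0 : c I * ((∑ i ∈ I, a i * gv i ^ 2) - (c I)⁻¹ * (∑ i ∈ I, a i * gv i)^2)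
        = (∑ i ∈ I, a i * gv i ^ 2) * (∑ j ∈ I, a j)
          - (∑ i ∈ I, a i * gv i) * (∑ j ∈ I, a j * gv j) := by
      rw [hcI I hI] at hcne ⊢
      field_simp
    rw [e0, Finset.sum_mul_sum, Finset.sum_mul_sum, ← Finset.sum_sub_distrib]
    exact Finset.sum_congr rfl fun i _ => by rw [← Finset.sum_sub_distrib]
  have hsumQ : ∑ I ∈ Psets,
      c I * ((∑ i ∈ I, a i * gv i ^ 2) - (c I)⁻¹ * (∑ i ∈ I, a i * gv i)^2)
        = A' * (cn * T - S^2) := by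
    rw [Finset.sum_congr rfl hIQ,
      swap_count2 hτ hτn (fun i j => a i * gv i ^ 2 * a j - (a i * gv i) * (a j * gv j)) hφdiag]
    congr 1
    have e1 : ∑ i, ∑ j, (a i * gv i ^ 2 * a j - (a i * gv i) * (a j * gv j))
        = (∑ i, a i * gv i ^ 2) * (∑ j, a j) - (∑ i, a i * gv i) * (∑ j, a j * gv j) := by
      rw [Finset.sum_mul_sum, Finset.sum_mul_sum, ← Finset.sum_sub_distrib]
      exact Finset.sum_congr rfl fun i _ => by rw [← Finset.sum_sub_distrib]
    rw [e1, ← hT_def, ← hcn_def, ← hS_def]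
    ring
  have hEQ : ∑ I ∈ Psets,
      p I * ((∑ i ∈ I, a i * gv i ^ 2) - (c I)⁻¹ * (∑ i ∈ I, a i * gv i)^2)
        = (((τ:ℝ)-1)/((n:ℝ)-1)) * (T - cn⁻¹ * S^2) := by
    have e1 : ∀ I ∈ Psets,
        p I * ((∑ i ∈ I, a i * gv i ^ 2) - (c I)⁻¹ * (∑ i ∈ I, a i * gv i)^2)
          = (c I * ((∑ i ∈ I, a i * gv i ^ 2) - (c I)⁻¹ * (∑ i ∈ I, a i * gv i)^2))
            / (∑ J ∈ Psets, c J) := fun I hI => by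
      show (c I / ∑ J ∈ Psets, c J) * _ = _
      ring
    rw [Finset.sum_congr rfl e1, ← Finset.sum_div, hsumQ, hStot]
    have hne1 : (n:ℝ) - 1 ≠ 0 := by
      have : (2:ℝ) ≤ (n:ℝ) := by exact_mod_cast hn2
      linarith
    have hB''ne : B'' ≠ 0 := ne_of_gt hB''pos
    have hcnne : cn ≠ 0 := ne_of_gt hcnpos
    rw [show A' = B'' * ((τ:ℝ)-1) / ((n:ℝ)-1) by rw [eq_div_iff hne1]; linarith [hAB]]
    field_simp
  -- gradient lower bound
  have hnR : (0:ℝ) < (n:ℝ) := by exact_mod_cast (by omega : 0 < n)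
  set t0 : ℝ := (∑ k, gv k) / n with ht0_def
  set b : Fin n → ℝ := fun i => gv i - t0 with hb_def
  have hbsum : ∑ i, b i = 0 := by
    simp only [hb_def]
    rw [Finset.sum_sub_distrib, Finset.sum_const, Finset.card_univ, Fintype.card_fin,
      nsmul_eq_mul, ht0_def]
    field_simp
    ring
  have hSb : ∑ i, a i * b i = S - t0 * cn := by
    simp only [hb_def]
    have : ∀ i ∈ Finset.univ, a i * (gv i - t0) = a i * gv i - t0 * a i :=
      fun i _ => by ring
    rw [Finset.sum_congr rfl this, Finset.sum_sub_distrib, ← Finset.mul_sum, ← hS_def, ← hcn_def]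
  have hQb : T - cn⁻¹ * S^2 = (∑ i, a i * b i ^ 2) - cn⁻¹ * (∑ i, a i * b i)^2 := by
    have e1 : ∑ i, a i * b i ^ 2 = T - 2*t0*S + t0^2 * cn := by
      have := sum_quad Finset.univ a gv t0
      rw [← hT_def, ← hS_def, ← hcn_def] at this
      simpa [hb_def] using this
    rw [e1, hSb]
    have hcnne : cn ≠ 0 := ne_of_gt hcnpos
    field_simp
    ring
  have hQlb : (∑ i, a i * b i ^ 2) - cn⁻¹ * (∑ i, a i * b i)^2 ≥ m * ∑ i, b i ^ 2 := by
    have hSb' : ∑ i, a i * b i = ∑ i, (a i - m) * b i := by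
      have e : ∀ i ∈ Finset.univ, (a i - m) * b i = a i * b i - m * b i := fun i _ => by ring
      rw [Finset.sum_congr rfl e, Finset.sum_sub_distrib, ← Finset.mul_sum, hbsum, mul_zero,
        sub_zero]
    have hcs := wcs Finset.univ (fun i => a i - m) b (fun i _ => sub_nonneg.2 (hm i))
    have hw1 : ∑ i, (a i - m) = cn - n * m := by
      rw [Finset.sum_sub_distrib, Finset.sum_const, Finset.card_univ, Fintype.card_fin,
        nsmul_eq_mul, ← hcn_def]
    have hw2 : ∑ i, (a i - m) * b i ^ 2 = (∑ i, a i * b i ^ 2) - m * ∑ i, b i ^ 2 := by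
      have e : ∀ i ∈ Finset.univ, (a i - m) * b i ^ 2 = a i * b i ^ 2 - m * b i ^ 2 :=
        fun i _ => by ring
      rw [Finset.sum_congr rfl e, Finset.sum_sub_distrib, ← Finset.mul_sum]
    have hw2nonneg : 0 ≤ ∑ i, (a i - m) * b i ^ 2 :=
      Finset.sum_nonneg fun i _ => mul_nonneg (sub_nonneg.2 (hm i)) (sq_nonneg _)
    have hkey : (∑ i, a i * b i)^2 ≤ cn * ((∑ i, a i * b i ^ 2) - m * ∑ i, b i ^ 2) := by
      rw [hSb', ← hw2]
      have hwle : ∑ i, (a i - m) ≤ cn := by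
        rw [hw1]
        have h0 : 0 ≤ (n:ℝ) * m := mul_nonneg (le_of_lt hnR) (le_of_lt hmpos)
        linarith
      calc (∑ i, (a i - m) * b i)^2
          ≤ (∑ i, (a i - m)) * ∑ i, (a i - m) * b i ^ 2 := hcs
        _ ≤ cn * ∑ i, (a i - m) * b i ^ 2 :=
            mul_le_mul_of_nonneg_right hwle hw2nonneg
    have h2 : cn⁻¹ * (∑ i, a i * b i)^2 ≤ (∑ i, a i * b i ^ 2) - m * ∑ i, b i ^ 2 := by
      rw [inv_mul_le_iff₀ hcnpos]
      exact hkey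
    linarith
  have hdelta : H x - H xstar ≤ (∑ i, b i ^ 2) / (2*μ) := by
    have hs0 : ∑ i, (xstar i - x i) = 0 := by
      rw [Finset.sum_sub_distrib, hfeas, hx, sub_zero]
    have hsum : H x + ∑ i, gv i * (xstar i - x i) + μ/2 * ∑ i, (xstar i - x i)^2
        ≤ H xstar := by
      have e : ∀ i ∈ Finset.univ,
          h i (x i) + gv i * (xstar i - x i) + μ/2 * (xstar i - x i)^2 ≤ h i (xstar i) :=
        fun i _ => hsc i (xstar i) (x i)
      have := Finset.sum_le_sum e
      rw [Finset.sum_add_distrib, Finset.sum_add_distrib, ← Finset.mul_sum] at this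
      exact this
    have hgs : ∑ i, gv i * (xstar i - x i) = ∑ i, b i * (xstar i - x i) := by
      have e : ∀ i ∈ Finset.univ, gv i * (xstar i - x i)
          = b i * (xstar i - x i) + t0 * (xstar i - x i) := fun i _ => by
        simp only [hb_def]; ring
      rw [Finset.sum_congr rfl e, Finset.sum_add_distrib, ← Finset.mul_sum, hs0, mul_zero,
        add_zero]
    have hterm : ∀ i ∈ Finset.univ,
        - (b i * (xstar i - x i)) - μ/2 * (xstar i - x i)^2 ≤ b i ^ 2 / (2*μ) :=
      fun i _ => aux_young hμ (b i) (xstar i - x i)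
    have hsum2 := Finset.sum_le_sum hterm
    rw [Finset.sum_sub_distrib, Finset.sum_neg_distrib, ← Finset.mul_sum, ← Finset.sum_div]
      at hsum2
    rw [hgs] at hsum
    linarith
  have hgradlb : (2*μ/Lmax) * (H x - H xstar) ≤ T - cn⁻¹ * S^2 := by
    have h1 : 2*μ*(H x - H xstar) ≤ ∑ i, b i ^ 2 := by
      have := (le_div_iff₀ (by linarith : (0:ℝ) < 2*μ)).1 hdelta
      linarith
    rw [hQb]
    calc (2*μ/Lmax) * (H x - H xstar) = m * (2*μ*(H x - H xstar)) := by
          rw [hm_def]; field_simp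
      _ ≤ m * ∑ i, b i ^ 2 := mul_le_mul_of_nonneg_left h1 (le_of_lt hmpos)
      _ ≤ (∑ i, a i * b i ^ 2) - cn⁻¹ * (∑ i, a i * b i)^2 := hQlb
  -- probabilities
  have hpnonneg : ∀ I ∈ Psets, 0 ≤ p I := fun I hI =>
    div_nonneg (le_of_lt (hcIpos I hI)) (le_of_lt hStotpos)
  have hpsum : ∑ I ∈ Psets, p I = 1 := by
    show ∑ I ∈ Psets, c I / (∑ J ∈ Psets, c J) = 1
    rw [← Finset.sum_div]
    exact div_self (ne_of_gt hStotpos)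
  have hΔ : 0 ≤ H x - H xstar := sub_nonneg.2 (hopt x hx)
  have hρ : 0 ≤ ((τ:ℝ)-1)/((n:ℝ)-1) := by
    apply div_nonneg
    · have : (2:ℝ) ≤ (τ:ℝ) := by exact_mod_cast hτ
      linarith
    · have : (2:ℝ) ≤ (n:ℝ) := by exact_mod_cast hn2
      linarith
  have hmain1 : ∑ I ∈ Psets, p I * H (x - G I *ᵥ gradH x)
      ≤ ∑ I ∈ Psets, p I * (H x - (1/2) * ((∑ i ∈ I, a i * gv i ^ 2)
          - (c I)⁻¹ * (∑ i ∈ I, a i * gv i)^2)) :=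
    Finset.sum_le_sum fun I hI => mul_le_mul_of_nonneg_left (hdesc I hI) (hpnonneg I hI)
  have hmain2 : ∑ I ∈ Psets, p I * (H x - (1/2) * ((∑ i ∈ I, a i * gv i ^ 2)
          - (c I)⁻¹ * (∑ i ∈ I, a i * gv i)^2))
      = H x - (1/2) * ∑ I ∈ Psets, p I * ((∑ i ∈ I, a i * gv i ^ 2)
          - (c I)⁻¹ * (∑ i ∈ I, a i * gv i)^2) := by
    have e : ∀ I ∈ Psets, p I * (H x - (1/2) * ((∑ i ∈ I, a i * gv i ^ 2)
          - (c I)⁻¹ * (∑ i ∈ I, a i * gv i)^2))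
        = p I * H x - (1/2) * (p I * ((∑ i ∈ I, a i * gv i ^ 2)
          - (c I)⁻¹ * (∑ i ∈ I, a i * gv i)^2)) := fun I _ => by ring
    rw [Finset.sum_congr rfl e, Finset.sum_sub_distrib, ← Finset.sum_mul, hpsum, one_mul,
      ← Finset.mul_sum]
  have hprod : (((τ:ℝ)-1)/((n:ℝ)-1)) * ((2*μ/Lmax) * (H x - H xstar))
      ≤ (((τ:ℝ)-1)/((n:ℝ)-1)) * (T - cn⁻¹ * S^2) :=
    mul_le_mul_of_nonneg_left hgradlb hρ
  have hfinal : ∑ I ∈ Psets, p I * H (x - G I *ᵥ gradH x)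
      ≤ H x - (1/2) * ((((τ:ℝ)-1)/((n:ℝ)-1)) * ((2*μ/Lmax) * (H x - H xstar))) := by
    calc ∑ I ∈ Psets, p I * H (x - G I *ᵥ gradH x)
        ≤ ∑ I ∈ Psets, p I * (H x - (1/2) * ((∑ i ∈ I, a i * gv i ^ 2)
            - (c I)⁻¹ * (∑ i ∈ I, a i * gv i)^2)) := hmain1
      _ = H x - (1/2) * ∑ I ∈ Psets, p I * ((∑ i ∈ I, a i * gv i ^ 2)
            - (c I)⁻¹ * (∑ i ∈ I, a i * gv i)^2) := hmain2
      _ = H x - (1/2) * ((((τ:ℝ)-1)/((n:ℝ)-1)) * (T - cn⁻¹ * S^2)) := by rw [hEQ]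
      _ ≤ H x - (1/2) * ((((τ:ℝ)-1)/((n:ℝ)-1)) * ((2*μ/Lmax) * (H x - H xstar))) := by
          linarith
  have hring : H x - (1/2) * ((((τ:ℝ)-1)/((n:ℝ)-1)) * ((2*μ/Lmax) * (H x - H xstar)))
      - H xstar
      = (1 - (((τ : ℝ) - 1) / ((n : ℝ) - 1)) * (μ / Lmax)) * (H x - H xstar) := by
    ring
  linarith
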